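/- For the coupon collector problem with k coupon types drawn with probabilities p₁,...,p_k (positive, summing to 1), the expected number of draws τ to collect all k types satisfies E[τ] = Σ_{I ⊊ {1,...,k}} (−1)^{k−|I|−1} / (1 − Σ_{i∈I} p_i). In the uniform case p_i = 1/k this equals k·(1 + 1/2 + ... + 1/k). -/

import Mathlib

open Finset

/-- The probability that after `nd` independent draws (draw `j` yielding coupon `f j` with
probability `∏ j, p (f j)`) not all `k` coupon types have been collected, i.e. `Pr(τ > nd)`. -/
noncomputable def couponTailProb (k : ℕ) (p : Fin k → ℝ) (nd : ℕ) : ℝ :=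
  ∑ f : Fin nd → Fin k, if Function.Surjective f then 0 else ∏ j : Fin nd, p (f j)

/-- The expected number of draws `E[τ]` to collect all `k` coupon types, expressed via the
standard identity `E[τ] = ∑_{n ≥ 0} Pr(τ > n)`. -/
noncomputable def couponCollectorExpectation (k : ℕ) (p : Fin k → ℝ) : ℝ :=
  ∑' nd : ℕ, couponTailProb k p nd

lemma real_sum_powerset_neg_one_pow_card {α : Type*} [DecidableEq α] (x : Finset α) :
    ∑ m ∈ x.powerset, (-1 : ℝ) ^ m.card = if x = ∅ then 1 else 0 := by
  have h2 := congrArg (fun z : ℤ => (z : ℝ)) (Finset.sum_powerset_neg_one_pow_card (x := x))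
  push_cast at h2
  split at h2 <;> split <;> simp_all

lemma coupon_key {k : ℕ} (R : Finset (Fin k)) :
    ∑ S : Finset (Fin k),
        (if R ⊆ S ∧ S ≠ Finset.univ then (-1 : ℝ) ^ (k - S.card - 1) else 0)
      = if R = Finset.univ then 0 else 1 := by
  have hbij : Function.Bijective (fun S : Finset (Fin k) => Sᶜ) :=
    Function.Involutive.bijective (fun S => compl_compl S)
  rw [← Function.Bijective.sum_comp hbij
    (fun S => if R ⊆ S ∧ S ≠ Finset.univ then (-1 : ℝ) ^ (k - S.card - 1) else 0)]
  have step1 : ∀ T : Finset (Fin k),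
      (if R ⊆ Tᶜ ∧ Tᶜ ≠ Finset.univ then (-1 : ℝ) ^ (k - Tᶜ.card - 1) else 0)
      = (if T ⊆ Rᶜ then -(-1 : ℝ) ^ T.card else 0) + (if T = ∅ then 1 else 0) := by
    intro T
    have hc : Tᶜ.card = k - T.card := by
      simp [Finset.card_compl]
    have hsub : (R ⊆ Tᶜ) ↔ (T ⊆ Rᶜ) := by
      constructor <;> intro h <;> exact Finset.subset_compl_comm.mp (by simpa using h)
    have hne : (Tᶜ ≠ Finset.univ) ↔ T ≠ ∅ := by
      simp [Finset.compl_eq_univ_iff]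
    by_cases hT : T = ∅
    · subst hT; simp
    · have hcard : 1 ≤ T.card := Finset.card_pos.mpr (Finset.nonempty_of_ne_empty hT)
      have hle : T.card ≤ k := by simpa using Finset.card_le_univ T
      have hexp : k - Tᶜ.card - 1 = T.card - 1 := by omega
      by_cases hs : T ⊆ Rᶜ
      · rw [if_pos ⟨hsub.mpr hs, hne.mpr hT⟩, if_pos hs, if_neg hT, hexp]
        have : (-1 : ℝ) ^ T.card = (-1 : ℝ) ^ (T.card - 1) * (-1) := by
          rw [← pow_succ]; congr 1; omega
        rw [this]; ring
      · rw [if_neg (by tauto), if_neg hs, if_neg hT]; ring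
  rw [Finset.sum_congr rfl (fun T _ => step1 T), Finset.sum_add_distrib]
  have e1 : ∑ T : Finset (Fin k), (if T ⊆ Rᶜ then -(-1 : ℝ) ^ T.card else 0)
      = -(if R = Finset.univ then (1:ℝ) else 0) := by
    have : ∀ T : Finset (Fin k), (T ⊆ Rᶜ) = (T ∈ Rᶜ.powerset) := by
      intro T; simp [Finset.mem_powerset]
    simp_rw [this]
    rw [Finset.sum_ite_mem, Finset.univ_inter]
    rw [show (∑ i ∈ Rᶜ.powerset, -(-1:ℝ) ^ i.card) = -∑ i ∈ Rᶜ.powerset, (-1:ℝ) ^ i.card by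
      rw [Finset.sum_neg_distrib]]
    rw [real_sum_powerset_neg_one_pow_card Rᶜ]
    simp [Finset.compl_eq_empty_iff]
  have e2 : ∑ T : Finset (Fin k), (if T = ∅ then (1:ℝ) else 0) = 1 := by
    rw [Finset.sum_ite_eq' Finset.univ ∅ (fun _ => (1:ℝ))]; simp
  rw [e1, e2]
  split <;> ring

lemma image_univ_eq_univ_iff {n k : ℕ} (f : Fin n → Fin k) :
    Finset.image f Finset.univ = Finset.univ ↔ Function.Surjective f := by
  simp [Finset.eq_univ_iff_forall, Function.Surjective, Finset.mem_image, eq_comm]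

lemma coupon_tail_eq (k : ℕ) (p : Fin k → ℝ) (n : ℕ) :
    couponTailProb k p n =
      ∑ S ∈ (Finset.univ : Finset (Fin k)).powerset.filter (· ≠ Finset.univ),
        (-1 : ℝ) ^ (k - S.card - 1) * (∑ i ∈ S, p i) ^ n := by
  have hpow : ∀ S : Finset (Fin k),
      (∑ i ∈ S, p i) ^ n = ∑ f : Fin n → Fin k, ∏ j, (if f j ∈ S then p (f j) else 0) := by
    intro S
    rw [show (∑ i ∈ S, p i) = ∑ i : Fin k, (if i ∈ S then p i else 0) by
      rw [Finset.sum_ite_mem, Finset.univ_inter]]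
    rw [Fintype.sum_pow]
  have hprod : ∀ (f : Fin n → Fin k) (S : Finset (Fin k)),
      (∏ j, (if f j ∈ S then p (f j) else 0))
        = if Finset.image f Finset.univ ⊆ S then ∏ j, p (f j) else 0 := by
    intro f S
    by_cases h : Finset.image f Finset.univ ⊆ S
    · rw [if_pos h]
      exact Finset.prod_congr rfl fun j _ =>
        if_pos (h (Finset.mem_image_of_mem f (Finset.mem_univ j)))
    · rw [if_neg h]
      rw [Finset.image_subset_iff] at h
      push_neg at h
      obtain ⟨j, -, hj⟩ := h
      exact Finset.prod_eq_zero (Finset.mem_univ j) (if_neg hj)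
  rw [Finset.powerset_univ, Finset.sum_filter]
  simp_rw [hpow, Finset.mul_sum]
  rw [show (∑ S : Finset (Fin k), if S ≠ Finset.univ then
        (∑ f : Fin n → Fin k, (-1:ℝ) ^ (k - S.card - 1) * ∏ j, (if f j ∈ S then p (f j) else 0))
        else 0)
      = ∑ S : Finset (Fin k), ∑ f : Fin n → Fin k, (if S ≠ Finset.univ then
        ((-1:ℝ) ^ (k - S.card - 1) * ∏ j, (if f j ∈ S then p (f j) else 0)) else 0) by
    refine Finset.sum_congr rfl fun S _ => ?_
    by_cases h : S ≠ Finset.univ <;> simp [h]]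
  rw [Finset.sum_comm]
  unfold couponTailProb
  refine Finset.sum_congr rfl fun f _ => ?_
  have : ∀ S : Finset (Fin k),
      (if S ≠ Finset.univ then
        ((-1:ℝ) ^ (k - S.card - 1) * ∏ j, (if f j ∈ S then p (f j) else 0)) else 0)
      = (if Finset.image f Finset.univ ⊆ S ∧ S ≠ Finset.univ then
          (-1:ℝ) ^ (k - S.card - 1) else 0) * ∏ j, p (f j) := by
    intro S
    rw [hprod f S]
    by_cases h1 : S ≠ Finset.univ <;> by_cases h2 : Finset.image f Finset.univ ⊆ S <;>
      simp [h1, h2]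
  rw [Finset.sum_congr rfl fun S _ => this S, ← Finset.sum_mul, coupon_key]
  by_cases hs : Function.Surjective f
  · rw [if_pos hs, if_pos ((image_univ_eq_univ_iff f).mpr hs)]; ring
  · rw [if_neg hs, if_neg (fun h => hs ((image_univ_eq_univ_iff f).mp h))]; ring

lemma real_alternating_sum_range_choose_of_ne {n : ℕ} (h0 : n ≠ 0) :
    ∑ m ∈ Finset.range (n + 1), (-1 : ℝ) ^ m * (n.choose m : ℝ) = 0 := by
  have h2 := congrArg (fun z : ℤ => (z : ℝ)) (Int.alternating_sum_range_choose_of_ne h0)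
  push_cast at h2
  exact h2

lemma binom_harmonic (k : ℕ) :
    ∑ m ∈ Finset.range k, (-1 : ℝ) ^ m * (k.choose (m + 1) : ℝ) / (m + 1)
      = ∑ m ∈ Finset.range k, 1 / ((m : ℝ) + 1) := by
  induction k with
  | zero => simp
  | succ k ih =>
    have hpascal : ∀ m : ℕ, ((k+1).choose (m+1) : ℝ) = (k.choose m : ℝ) + (k.choose (m+1) : ℝ) := by
      intro m; rw [Nat.choose_succ_succ]; push_cast; ring
    have hsplit : ∑ m ∈ Finset.range (k+1), (-1 : ℝ) ^ m * ((k+1).choose (m + 1) : ℝ) / (m + 1)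
        = (∑ m ∈ Finset.range (k+1), (-1 : ℝ) ^ m * (k.choose m : ℝ) / (m + 1))
          + ∑ m ∈ Finset.range (k+1), (-1 : ℝ) ^ m * (k.choose (m+1) : ℝ) / (m + 1) := by
      rw [← Finset.sum_add_distrib]
      refine Finset.sum_congr rfl fun m _ => ?_
      rw [hpascal m]; ring
    have hB : ∑ m ∈ Finset.range (k+1), (-1 : ℝ) ^ m * (k.choose (m+1) : ℝ) / (m + 1)
        = ∑ m ∈ Finset.range k, (-1 : ℝ) ^ m * (k.choose (m+1) : ℝ) / (m + 1) := by
      rw [Finset.sum_range_succ, Nat.choose_succ_self]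
      simp
    have hterm : ∀ m : ℕ, (-1 : ℝ) ^ m * (k.choose m : ℝ) / (m + 1)
        = (-1 : ℝ) ^ m * ((k+1).choose (m+1) : ℝ) / (k + 1) := by
      intro m
      have h := Nat.add_one_mul_choose_eq k m
      have h' : ((k:ℝ) + 1) * (k.choose m : ℝ) = ((k+1).choose (m+1) : ℝ) * ((m:ℝ) + 1) := by
        exact_mod_cast congrArg (fun z : ℕ => (z : ℝ)) h
      have hm : ((m:ℝ) + 1) ≠ 0 := by positivity
      have hk : ((k:ℝ) + 1) ≠ 0 := by positivity
      field_simp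
      linear_combination h'
    have hA : ∑ m ∈ Finset.range (k+1), (-1 : ℝ) ^ m * (k.choose m : ℝ) / (m + 1)
        = 1 / ((k:ℝ) + 1) := by
      rw [Finset.sum_congr rfl fun m _ => hterm m]
      have hS : ∑ m ∈ Finset.range (k+1), (-1 : ℝ) ^ m * ((k+1).choose (m+1) : ℝ) = 1 := by
        have h0 := real_alternating_sum_range_choose_of_ne (n := k+1) (Nat.succ_ne_zero k)
        rw [Finset.sum_range_succ'] at h0
        simp only [Nat.choose_zero_right, pow_zero] at h0
        norm_num at h0
        have : ∑ m ∈ Finset.range (k+1), (-1 : ℝ) ^ (m+1) * ((k+1).choose (m+1) : ℝ) = -1 := by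
          linarith
        calc ∑ m ∈ Finset.range (k+1), (-1 : ℝ) ^ m * ((k+1).choose (m+1) : ℝ)
            = -∑ m ∈ Finset.range (k+1), (-1 : ℝ) ^ (m+1) * ((k+1).choose (m+1) : ℝ) := by
              rw [← Finset.sum_neg_distrib]; refine Finset.sum_congr rfl fun m _ => ?_; ring
          _ = 1 := by rw [this]; ring
      rw [show (∑ m ∈ Finset.range (k+1), (-1 : ℝ) ^ m * ((k+1).choose (m+1) : ℝ) / (k + 1))
          = (∑ m ∈ Finset.range (k+1), (-1 : ℝ) ^ m * ((k+1).choose (m+1) : ℝ)) / (k+1) by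
        rw [Finset.sum_div]]
      rw [hS]
    push_cast at hsplit hB hA ⊢
    rw [hsplit, hB, hA, ih, Finset.sum_range_succ]
    ring

theorem couponCollector_expectation (k : ℕ) (hk : 0 < k) (p : Fin k → ℝ)
    (hp : ∀ i, 0 < p i) (hsum : ∑ i : Fin k, p i = 1) :
    couponCollectorExpectation k p =
      ∑ I ∈ (Finset.univ : Finset (Fin k)).powerset.filter (· ≠ Finset.univ),
        (-1 : ℝ) ^ (k - I.card - 1) / (1 - ∑ i ∈ I, p i) ∧
    ((∀ i, p i = 1 / k) →
      couponCollectorExpectation k p = k * ∑ i ∈ Finset.range k, (1 : ℝ) / (i + 1)) := by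
  classical
  have hq0 : ∀ S ∈ (Finset.univ : Finset (Fin k)).powerset.filter (· ≠ Finset.univ),
      (0:ℝ) ≤ ∑ i ∈ S, p i := fun S _ => Finset.sum_nonneg fun i _ => (hp i).le
  have hq1 : ∀ S ∈ (Finset.univ : Finset (Fin k)).powerset.filter (· ≠ Finset.univ),
      (∑ i ∈ S, p i) < 1 := by
    intro S hS
    rw [Finset.mem_filter, Finset.mem_powerset] at hS
    obtain ⟨hSu, hne⟩ := hS
    obtain ⟨i, hi⟩ : ∃ i, i ∉ S := by
      by_contra h; push_neg at h
      exact hne (Finset.eq_univ_iff_forall.mpr h)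
    calc (∑ i ∈ S, p i) < ∑ i : Fin k, p i :=
        Finset.sum_lt_sum_of_subset (Finset.subset_univ S) (Finset.mem_univ i) hi (hp i)
          (fun j _ _ => (hp j).le)
      _ = 1 := hsum
  have part1 : couponCollectorExpectation k p =
      ∑ I ∈ (Finset.univ : Finset (Fin k)).powerset.filter (· ≠ Finset.univ),
        (-1 : ℝ) ^ (k - I.card - 1) / (1 - ∑ i ∈ I, p i) := by
    unfold couponCollectorExpectation
    rw [tsum_congr (coupon_tail_eq k p)]
    rw [Summable.tsum_finsetSum (fun S hS => Summable.mul_left _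
      (summable_geometric_of_lt_one (hq0 S hS) (hq1 S hS)))]
    refine Finset.sum_congr rfl fun S hS => ?_
    rw [tsum_mul_left, tsum_geometric_of_lt_one (hq0 S hS) (hq1 S hS), div_eq_mul_inv]
  refine ⟨part1, fun hu => ?_⟩
  rw [part1]
  have hk' : (k:ℝ) ≠ 0 := Nat.cast_ne_zero.mpr hk.ne'
  have hqS : ∀ S : Finset (Fin k), (∑ i ∈ S, p i) = (S.card : ℝ) / k := by
    intro S
    rw [Finset.sum_congr rfl fun i _ => hu i, Finset.sum_const, nsmul_eq_mul]
    ring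
  set g : ℕ → ℝ := fun c => if c = k then 0 else (-1:ℝ)^(k - c - 1) / (1 - (c:ℝ)/k) with hg
  have hcardne : ∀ S ∈ (Finset.univ : Finset (Fin k)).powerset.filter (· ≠ Finset.univ),
      S.card ≠ k := by
    intro S hS
    rw [Finset.mem_filter] at hS
    intro hc
    exact hS.2 ((Finset.card_eq_iff_eq_univ S).mp (by simpa using hc))
  have step1 : (∑ I ∈ (Finset.univ : Finset (Fin k)).powerset.filter (· ≠ Finset.univ),
        (-1 : ℝ) ^ (k - I.card - 1) / (1 - ∑ i ∈ I, p i))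
      = ∑ S ∈ (Finset.univ : Finset (Fin k)).powerset, g S.card := by
    rw [← Finset.sum_filter_add_sum_filter_not
        (Finset.univ : Finset (Fin k)).powerset (· ≠ Finset.univ) (fun S => g S.card)]
    have h2 : ∑ S ∈ (Finset.univ : Finset (Fin k)).powerset.filter
        (fun S => ¬ S ≠ Finset.univ), g S.card = 0 := by
      refine Finset.sum_eq_zero fun S hS => ?_
      rw [Finset.mem_filter, not_ne_iff] at hS
      rw [hS.2, hg]
      simp
    rw [h2, add_zero]
    refine Finset.sum_congr rfl fun S hS => ?_
    rw [hqS S, hg]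
    simp only [hcardne S hS, if_false]
  rw [step1, Finset.sum_powerset_apply_card g, Finset.card_univ, Fintype.card_fin,
    Finset.sum_range_succ]
  have hgk : g k = 0 := by rw [hg]; simp
  rw [hgk, smul_zero, add_zero]
  have hterm : ∀ m ∈ Finset.range k, (k.choose m) • g m
      = (k.choose m : ℝ) * (-1:ℝ)^(k - m - 1) * k / ((k:ℝ) - m) := by
    intro m hm
    rw [Finset.mem_range] at hm
    have hne : ((k:ℝ) - m) ≠ 0 := by
      have : (m:ℝ) < k := by exact_mod_cast hm
      linarith
    rw [hg, nsmul_eq_mul]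
    simp only [hm.ne, if_false]
    rw [show (1 - (m:ℝ)/k) = ((k:ℝ) - m)/k by field_simp]
    field_simp
  rw [Finset.sum_congr rfl hterm]
  rw [← Finset.sum_range_reflect (fun m => (k.choose m : ℝ) * (-1:ℝ)^(k - m - 1) * k / ((k:ℝ) - m)) k]
  have hrefl : ∀ j ∈ Finset.range k,
      (k.choose (k - 1 - j) : ℝ) * (-1:ℝ)^(k - (k - 1 - j) - 1) * k / ((k:ℝ) - (k - 1 - j : ℕ))
      = (-1:ℝ)^j * (k.choose (j+1) : ℝ) / ((j:ℝ) + 1) * k := by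
    intro j hj
    rw [Finset.mem_range] at hj
    have h1 : k - 1 - j = k - (j + 1) := by omega
    rw [h1]
    have h2 : k - (k - (j + 1)) - 1 = j := by omega
    have h3 : k.choose (k - (j+1)) = k.choose (j+1) := Nat.choose_symm (by omega)
    have h4 : ((k - (j + 1) : ℕ) : ℝ) = (k:ℝ) - ((j:ℝ) + 1) := by
      push_cast [Nat.cast_sub (by omega : j + 1 ≤ k)]
      ring
    rw [h2, h3, h4]
    ring
  rw [Finset.sum_congr rfl hrefl, ← Finset.sum_mul, binom_harmonic k]
  ring
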